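/- arXiv:2009.03684 — 2 statements merged into one kernel-verified Lean document; each statement's English description precedes it below -/
import Mathlib

section
/- With V, τ_i, η_j as above, the partial derivative of V with respect to α₁ equals (1/4)·log[ |sin((α₁+α₂-α₃)/2)·sin((α₁+α₃-α₂)/2)·sin((α₁+α₅-α₆)/2)·sin((α₁+α₆-α₅)/2)| / |sin((α₂+α₃-α₁)/2)·sin((α₁+α₂+α₃)/2)·sin((α₅+α₆-α₁)/2)·sin((α₁+α₅+α₆)/2)| ] + (1/2)·log[ |sin(ξ-τ₁) sin(ξ-τ₂)| / |sin(η₁-ξ) sin(η₂-ξ)| ], at all points where none of the sine arguments is an integer multiple of π. -/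
open Real MeasureTheory Set

/-- The Lobachevsky function `Λ(θ) = -∫₀^θ log|2 sin t| dt`. -/
noncomputable def Lob (θ : ℝ) : ℝ :=
  -∫ t in (0:ℝ)..θ, Real.log |2 * Real.sin t|

noncomputable def lobDelta (x y z : ℝ) : ℝ :=
  -(1/2) * Lob ((x + y - z)/2) - (1/2) * Lob ((y + z - x)/2) - (1/2) * Lob ((z + x - y)/2)
    + (1/2) * Lob ((x + y + z)/2)

/-- `V(α₁,…,α₆,ξ)` from (the square of) the quantum 6j-symbol asymptotics. -/
noncomputable def Vfun (a1 a2 a3 a4 a5 a6 ξ : ℝ) : ℝ :=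
  lobDelta a1 a2 a3 + lobDelta a1 a5 a6 + lobDelta a2 a4 a6 + lobDelta a3 a4 a5
    - Lob ξ
    + (Lob (ξ - (a1 + a2 + a3)/2) + Lob (ξ - (a1 + a5 + a6)/2)
        + Lob (ξ - (a2 + a4 + a6)/2) + Lob (ξ - (a3 + a4 + a5)/2))
    + (Lob ((a1 + a2 + a4 + a5)/2 - ξ) + Lob ((a1 + a3 + a4 + a6)/2 - ξ)
        + Lob ((a2 + a3 + a5 + a6)/2 - ξ))


lemma integrableOn_neg_log_Ioc01 : IntegrableOn (fun x : ℝ => -Real.log x) (Set.Ioc (0:ℝ) 1) := by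
  have hderiv : ∀ x ∈ Set.Ioo (0:ℝ) 1, HasDerivAt (fun x : ℝ => x - x * Real.log x) (-Real.log x) x := by
    intro x hx
    have h := (hasDerivAt_id x).sub (Real.hasDerivAt_mul_log (ne_of_gt hx.1))
    refine h.congr_deriv ?_
    ring
  have hcont : ContinuousOn (fun x : ℝ => x - x * Real.log x) (Set.Icc 0 1) :=
    (continuous_id.sub Real.continuous_mul_log).continuousOn
  have hpos : ∀ x ∈ Set.Ioo (0:ℝ) 1, 0 ≤ -Real.log x := fun x hx =>
    neg_nonneg.2 (Real.log_nonpos hx.1.le hx.2.le)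
  exact intervalIntegral.integrableOn_deriv_of_nonneg hcont hderiv hpos

lemma integrableOn_log_Ioc_pi2 : IntegrableOn Real.log (Set.Ioc (0:ℝ) (π/2)) := by
  have h1 : (1:ℝ) ≤ π/2 := by linarith [Real.pi_gt_three]
  rw [← Set.Ioc_union_Ioc_eq_Ioc zero_le_one h1]
  refine MeasureTheory.IntegrableOn.union ?_ ?_
  · have h := integrableOn_neg_log_Ioc01.neg
    rwa [show (-fun x : ℝ => -Real.log x) = Real.log by funext x; simp] at h
  · have hc : ContinuousOn Real.log (Set.Icc (1:ℝ) (π/2)) :=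
      Real.continuousOn_log.mono (fun x hx => by
        simp only [Set.mem_compl_iff, Set.mem_singleton_iff]
        have := hx.1; intro h; rw [h] at this; linarith)
    exact (hc.integrableOn_Icc).mono_set Set.Ioc_subset_Icc_self

lemma meas_L : Measurable (fun t : ℝ => Real.log |2 * Real.sin t|) :=
  Real.measurable_log.comp ((measurable_const.mul Real.measurable_sin).abs)

lemma ii_L_0_pi2 : IntervalIntegrable (fun t : ℝ => Real.log |2 * Real.sin t|) volume 0 (π/2) := by
  rw [intervalIntegrable_iff_integrableOn_Ioc_of_le (by positivity)]
  have hg : IntegrableOn (fun x : ℝ => Real.log 2 + |Real.log x|) (Set.Ioc (0:ℝ) (π/2)) := by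
    refine ((integrableOn_const_iff).mpr ?_).add integrableOn_log_Ioc_pi2.abs
    right; exact measure_Ioc_lt_top
  refine hg.integrable.mono' (meas_L.aestronglyMeasurable) ?_
  filter_upwards [ae_restrict_mem measurableSet_Ioc] with x hx
  have hx0 : 0 < x := hx.1
  have hxpi : x < π := lt_of_le_of_lt hx.2 (by linarith [Real.pi_pos])
  have hs : 0 < Real.sin x := Real.sin_pos_of_pos_of_lt_pi hx0 hxpi
  have hlow : x ≤ 2 * Real.sin x := by
    have h := Real.mul_le_sin hx0.le hx.2
    rw [div_mul_eq_mul_div, div_le_iff₀ Real.pi_pos] at h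
    nlinarith [Real.pi_le_four, hs.le]
  have habs : |2 * Real.sin x| = 2 * Real.sin x := abs_of_pos (by linarith)
  rw [Real.norm_eq_abs, habs]
  rcases le_or_gt 0 (Real.log (2 * Real.sin x)) with hc | hc
  · rw [abs_of_nonneg hc]
    have h2 : Real.log (2 * Real.sin x) ≤ Real.log 2 :=
      Real.log_le_log (by linarith) (by nlinarith [Real.sin_le_one x])
    have := abs_nonneg (Real.log x)
    linarith
  · rw [abs_of_neg hc]
    have h2 : Real.log x ≤ Real.log (2 * Real.sin x) := Real.log_le_log hx0 hlow
    have := neg_abs_le (Real.log x)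
    have h3 : 0 ≤ Real.log 2 := Real.log_nonneg one_le_two
    linarith

lemma ii_L_0_pi : IntervalIntegrable (fun t : ℝ => Real.log |2 * Real.sin t|) volume 0 π := by
  refine ii_L_0_pi2.trans ?_
  have h := ii_L_0_pi2.comp_sub_left π
  have he : (fun x => Real.log |2 * Real.sin (π - x)|) = fun x : ℝ => Real.log |2 * Real.sin x| := by
    funext x; rw [Real.sin_pi_sub]
  rw [he] at h
  have e2 : π - 0 = π := by ring
  have e3 : π - π/2 = π/2 := by ring
  rw [e2, e3] at h
  exact h.symm

lemma L_shift (k : ℤ) (x : ℝ) :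
    Real.log |2 * Real.sin (x + k * π)| = Real.log |2 * Real.sin x| := by
  congr 1
  rw [Real.sin_add_int_mul_pi, abs_mul, abs_mul, abs_mul]
  rw [show |(-1:ℝ) ^ k| = 1 by
    rcases Int.even_or_odd k with h | h
    · rw [h.neg_one_zpow]; norm_num
    · rw [h.neg_one_zpow]; norm_num]
  ring

lemma ii_L_shift (k : ℤ) : IntervalIntegrable (fun t : ℝ => Real.log |2 * Real.sin t|)
    volume (k * π) (k * π + π) := by
  have h := ii_L_0_pi.comp_add_right (-(k * π))
  have he : (fun x => Real.log |2 * Real.sin (x + -(k * π))|)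
      = fun x : ℝ => Real.log |2 * Real.sin x| := by
    funext x
    have := L_shift (-k) x
    push_cast at this
    rw [← this]; ring_nf
  rw [he] at h
  have e1 : (0:ℝ) - -(k * π) = k * π := by ring
  have e2 : π - -(k * π) = k * π + π := by ring
  rwa [e1, e2] at h

lemma ii_L_sym (n : ℕ) : IntervalIntegrable (fun t : ℝ => Real.log |2 * Real.sin t|)
    volume (-(n * π)) (n * π) := by
  induction n with
  | zero => simp
  | succ m ih =>
    have hleft : IntervalIntegrable (fun t : ℝ => Real.log |2 * Real.sin t|)
        volume (-((m+1) * π)) (-(m * π)) := by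
      have := ii_L_shift (-(m+1))
      have e1 : ((-(m+1) : ℤ) : ℝ) * π = -((m+1) * π) := by push_cast; ring
      have e2 : ((-(m+1) : ℤ) : ℝ) * π + π = -((m:ℝ) * π) := by push_cast; ring
      rwa [e2, e1] at this
    have hright : IntervalIntegrable (fun t : ℝ => Real.log |2 * Real.sin t|)
        volume ((m : ℝ) * π) ((m+1) * π) := by
      have := ii_L_shift m
      have e2 : ((m : ℤ) : ℝ) * π + π = ((m:ℝ)+1) * π := by push_cast; ring
      rw [e2] at this
      have e1 : ((m : ℤ) : ℝ) * π = (m:ℝ) * π := by push_cast; ring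
      rwa [e1] at this
    have h1 := (hleft.trans ih).trans hright
    have e : ((m:ℝ)+1) * π = ((m+1 : ℕ) : ℝ) * π := by push_cast; ring
    rw [e] at h1
    exact h1

lemma ii_L (a b : ℝ) : IntervalIntegrable (fun t : ℝ => Real.log |2 * Real.sin t|)
    volume a b := by
  obtain ⟨n, hn⟩ := exists_nat_gt ((max |a| |b|) / π)
  have hπ := Real.pi_pos
  have hn' : max |a| |b| < n * π := by
    rw [div_lt_iff₀ hπ] at hn; linarith
  have ha : a ∈ Set.uIcc (-(n * π)) ((n:ℝ) * π) := by
    have h0 : (0:ℝ) ≤ (n:ℝ) * π := by positivity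
    rw [Set.uIcc_of_le (by linarith)]
    constructor
    · nlinarith [neg_abs_le a, le_max_left |a| |b|]
    · nlinarith [le_abs_self a, le_max_left |a| |b|]
  have hb : b ∈ Set.uIcc (-(n * π)) ((n:ℝ) * π) := by
    have h0 : (0:ℝ) ≤ (n:ℝ) * π := by positivity
    rw [Set.uIcc_of_le (by linarith)]
    constructor
    · nlinarith [neg_abs_le b, le_max_right |a| |b|]
    · nlinarith [le_abs_self b, le_max_right |a| |b|]
  exact (ii_L_sym n).mono_set (Set.uIcc_subset_uIcc ha hb)


lemma hasDerivAt_Lob {θ : ℝ} (h : Real.sin θ ≠ 0) :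
    HasDerivAt Lob (-Real.log |2 * Real.sin θ|) θ := by
  have hcont : ContinuousAt (fun t : ℝ => Real.log |2 * Real.sin t|) θ :=
    (Real.continuousAt_log (by simp [abs_eq_zero, h])).comp
      ((continuous_const.mul Real.continuous_sin).abs.continuousAt)
  have hmeas : StronglyMeasurableAtFilter (fun t : ℝ => Real.log |2 * Real.sin t|) (nhds θ) :=
    meas_L.stronglyMeasurable.stronglyMeasurableAtFilter
  have H := intervalIntegral.integral_hasDerivAt_right (ii_L 0 θ) hmeas hcont
  exact H.neg

lemma hasDerivAt_Lob_affine (s c : ℝ) {x : ℝ} (h : Real.sin (s * x + c) ≠ 0) :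
    HasDerivAt (fun y => Lob (s * y + c)) (-Real.log |2 * Real.sin (s * x + c)| * s) x := by
  have hin : HasDerivAt (fun y : ℝ => s * y + c) s x := by
    simpa using ((hasDerivAt_id x).const_mul s).add_const c
  exact HasDerivAt.comp (h₂ := Lob) x (hasDerivAt_Lob h) hin


lemma lob_comp (s c u : ℝ) (g : ℝ → ℝ) (hg : ∀ y, g y = s * y + c) {x : ℝ}
    (hu : g x = u) (h : Real.sin u ≠ 0) :
    HasDerivAt (fun y => Lob (g y)) (-Real.log |2 * Real.sin u| * s) x := by
  have h' : Real.sin (s * x + c) ≠ 0 := by rw [← hg x, hu]; exact h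
  have H := hasDerivAt_Lob_affine s c h'
  have e : (fun y => Lob (s * y + c)) = fun y => Lob (g y) := by
    funext y; rw [hg y]
  rw [e] at H
  rw [← hg x, hu] at H
  exact H

lemma hasDerivAt_lobDelta (b c : ℝ) {x : ℝ}
    (h1 : Real.sin ((x + b - c)/2) ≠ 0) (h2 : Real.sin ((b + c - x)/2) ≠ 0)
    (h3 : Real.sin ((c + x - b)/2) ≠ 0) (h4 : Real.sin ((x + b + c)/2) ≠ 0) :
    HasDerivAt (fun y => lobDelta y b c)
      ((Real.log |2 * Real.sin ((x + b - c)/2)| + Real.log |2 * Real.sin ((c + x - b)/2)|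
        - Real.log |2 * Real.sin ((b + c - x)/2)| - Real.log |2 * Real.sin ((x + b + c)/2)|)/4)
      x := by
  have D1 := lob_comp (1/2) ((b - c)/2) ((x + b - c)/2)
    (fun y => (y + b - c)/2) (fun y => by ring) rfl h1
  have D2 := lob_comp (-(1/2)) ((b + c)/2) ((b + c - x)/2)
    (fun y => (b + c - y)/2) (fun y => by ring) rfl h2
  have D3 := lob_comp (1/2) ((c - b)/2) ((c + x - b)/2)
    (fun y => (c + y - b)/2) (fun y => by ring) rfl h3
  have D4 := lob_comp (1/2) ((b + c)/2) ((x + b + c)/2)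
    (fun y => (y + b + c)/2) (fun y => by ring) rfl h4
  have H := (((D1.const_mul (-(1/2))).sub (D2.const_mul (1/2))).sub
      (D3.const_mul (1/2))).add (D4.const_mul (1/2))
  have e : (fun y => -(1/2) * Lob ((y + b - c)/2) - 1/2 * Lob ((b + c - y)/2)
      - 1/2 * Lob ((c + y - b)/2) + 1/2 * Lob ((y + b + c)/2))
      = fun y => lobDelta y b c := by
    funext y; simp only [lobDelta]
  simp only [Pi.add_def, Pi.sub_def] at H
  rw [e] at H
  refine H.congr_deriv ?_
  all_goals ring


lemma log_abs_mul2 (a b : ℝ) (ha : a ≠ 0) (hb : b ≠ 0) :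
    Real.log |a * b| = Real.log |a| + Real.log |b| := by
  rw [abs_mul, Real.log_mul (abs_ne_zero.mpr ha) (abs_ne_zero.mpr hb)]

lemma log_abs_mul4 (a b c d : ℝ) (ha : a ≠ 0) (hb : b ≠ 0) (hc : c ≠ 0) (hd : d ≠ 0) :
    Real.log |a * b * c * d| = Real.log |a| + Real.log |b| + Real.log |c| + Real.log |d| := by
  rw [log_abs_mul2 _ _ (mul_ne_zero (mul_ne_zero ha hb) hc) hd,
    log_abs_mul2 _ _ (mul_ne_zero ha hb) hc, log_abs_mul2 _ _ ha hb]

lemma log_two_abs (u : ℝ) (h : Real.sin u ≠ 0) :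
    Real.log |2 * Real.sin u| = Real.log 2 + Real.log |Real.sin u| := by
  rw [abs_mul, abs_two, Real.log_mul two_ne_zero (abs_ne_zero.mpr h)]

/-- The derivative of `V` in `α₁`. -/
theorem Vfun_deriv_alpha1 (a1 a2 a3 a4 a5 a6 ξ : ℝ)
    (h1 : ∀ n : ℤ, (a1 + a2 - a3)/2 ≠ n * Real.pi)
    (h2 : ∀ n : ℤ, (a1 + a3 - a2)/2 ≠ n * Real.pi)
    (h3 : ∀ n : ℤ, (a1 + a5 - a6)/2 ≠ n * Real.pi)
    (h4 : ∀ n : ℤ, (a1 + a6 - a5)/2 ≠ n * Real.pi)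
    (h5 : ∀ n : ℤ, (a2 + a3 - a1)/2 ≠ n * Real.pi)
    (h6 : ∀ n : ℤ, (a1 + a2 + a3)/2 ≠ n * Real.pi)
    (h7 : ∀ n : ℤ, (a5 + a6 - a1)/2 ≠ n * Real.pi)
    (h8 : ∀ n : ℤ, (a1 + a5 + a6)/2 ≠ n * Real.pi)
    (ht1 : ∀ n : ℤ, ξ - (a1 + a2 + a3)/2 ≠ n * Real.pi)
    (ht2 : ∀ n : ℤ, ξ - (a1 + a5 + a6)/2 ≠ n * Real.pi)
    (he1 : ∀ n : ℤ, (a1 + a2 + a4 + a5)/2 - ξ ≠ n * Real.pi)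
    (he2 : ∀ n : ℤ, (a1 + a3 + a4 + a6)/2 - ξ ≠ n * Real.pi) :
    HasDerivAt (fun x => Vfun x a2 a3 a4 a5 a6 ξ)
      ((1/4) * Real.log
          (|Real.sin ((a1 + a2 - a3)/2) * Real.sin ((a1 + a3 - a2)/2) *
              Real.sin ((a1 + a5 - a6)/2) * Real.sin ((a1 + a6 - a5)/2)| /
            |Real.sin ((a2 + a3 - a1)/2) * Real.sin ((a1 + a2 + a3)/2) *
              Real.sin ((a5 + a6 - a1)/2) * Real.sin ((a1 + a5 + a6)/2)|) +
        (1/2) * Real.log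
          (|Real.sin (ξ - (a1 + a2 + a3)/2) * Real.sin (ξ - (a1 + a5 + a6)/2)| /
            |Real.sin ((a1 + a2 + a4 + a5)/2 - ξ) * Real.sin ((a1 + a3 + a4 + a6)/2 - ξ)|))
      a1 := by
  have sne : ∀ u : ℝ, (∀ n : ℤ, u ≠ n * Real.pi) → Real.sin u ≠ 0 := fun u hu =>
    Real.sin_ne_zero_iff.mpr (fun n => (hu n).symm)
  have hs1 := sne _ h1
  have hs2 := sne _ h2
  have hs3 := sne _ h3
  have hs4 := sne _ h4
  have hs5 := sne _ h5
  have hs6 := sne _ h6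
  have hs7 := sne _ h7
  have hs8 := sne _ h8
  have hst1 := sne _ ht1
  have hst2 := sne _ ht2
  have hse1 := sne _ he1
  have hse2 := sne _ he2
  have hs2' : Real.sin ((a3 + a1 - a2)/2) ≠ 0 := by
    rw [show (a3 + a1 - a2)/2 = (a1 + a3 - a2)/2 by ring]; exact hs2
  have hs4' : Real.sin ((a6 + a1 - a5)/2) ≠ 0 := by
    rw [show (a6 + a1 - a5)/2 = (a1 + a6 - a5)/2 by ring]; exact hs4
  have HA := hasDerivAt_lobDelta a2 a3 hs1 hs5 hs2' hs6
  have HB := hasDerivAt_lobDelta a5 a6 hs3 hs7 hs4' hs8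
  have HT1 := lob_comp (-(1/2)) (ξ - (a2 + a3)/2) (ξ - (a1 + a2 + a3)/2)
    (fun y => ξ - (y + a2 + a3)/2) (fun y => by ring) rfl hst1
  have HT2 := lob_comp (-(1/2)) (ξ - (a5 + a6)/2) (ξ - (a1 + a5 + a6)/2)
    (fun y => ξ - (y + a5 + a6)/2) (fun y => by ring) rfl hst2
  have HU1 := lob_comp (1/2) ((a2 + a4 + a5)/2 - ξ) ((a1 + a2 + a4 + a5)/2 - ξ)
    (fun y => (y + a2 + a4 + a5)/2 - ξ) (fun y => by ring) rfl hse1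
  have HU2 := lob_comp (1/2) ((a3 + a4 + a6)/2 - ξ) ((a1 + a3 + a4 + a6)/2 - ξ)
    (fun y => (y + a3 + a4 + a6)/2 - ξ) (fun y => by ring) rfl hse2
  have H := (((((HA.add HB).add_const (lobDelta a2 a4 a6)).add_const
      (lobDelta a3 a4 a5)).sub_const (Lob ξ)).add
      (((HT1.add HT2).add_const (Lob (ξ - (a2 + a4 + a6)/2))).add_const
        (Lob (ξ - (a3 + a4 + a5)/2)))).add
      ((HU1.add HU2).add_const (Lob ((a2 + a3 + a5 + a6)/2 - ξ)))
  have efun : (fun x => lobDelta x a2 a3 + lobDelta x a5 a6 + lobDelta a2 a4 a6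
      + lobDelta a3 a4 a5 - Lob ξ
      + (Lob (ξ - (x + a2 + a3)/2) + Lob (ξ - (x + a5 + a6)/2)
          + Lob (ξ - (a2 + a4 + a6)/2) + Lob (ξ - (a3 + a4 + a5)/2))
      + (Lob ((x + a2 + a4 + a5)/2 - ξ) + Lob ((x + a3 + a4 + a6)/2 - ξ)
          + Lob ((a2 + a3 + a5 + a6)/2 - ξ)))
      = fun x => Vfun x a2 a3 a4 a5 a6 ξ := by
    funext y; simp only [Vfun]
  simp only [Pi.add_def, Pi.sub_def] at H
  rw [efun] at H
  refine H.congr_deriv ?_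
  rw [show (a3 + a1 - a2)/2 = (a1 + a3 - a2)/2 by ring,
    show (a6 + a1 - a5)/2 = (a1 + a6 - a5)/2 by ring,
    Real.log_div (abs_ne_zero.mpr (mul_ne_zero (mul_ne_zero (mul_ne_zero hs1 hs2) hs3) hs4))
      (abs_ne_zero.mpr (mul_ne_zero (mul_ne_zero (mul_ne_zero hs5 hs6) hs7) hs8)),
    Real.log_div (abs_ne_zero.mpr (mul_ne_zero hst1 hst2))
      (abs_ne_zero.mpr (mul_ne_zero hse1 hse2)),
    log_abs_mul4 _ _ _ _ hs1 hs2 hs3 hs4, log_abs_mul4 _ _ _ _ hs5 hs6 hs7 hs8,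
    log_abs_mul2 _ _ hst1 hst2, log_abs_mul2 _ _ hse1 hse2,
    log_two_abs _ hs1, log_two_abs _ hs2, log_two_abs _ hs5, log_two_abs _ hs6,
    log_two_abs _ hs3, log_two_abs _ hs4, log_two_abs _ hs7, log_two_abs _ hs8,
    log_two_abs _ hst1, log_two_abs _ hst2, log_two_abs _ hse1, log_two_abs _ hse2]
  ring
end

section
/- Let u₁,…,u₆ be nonzero complex numbers with A ≠ 0, and let z_α, z*_α be the two roots of Az² + Bz + C = 0. Then (1 - z_α u₁u₂u₄u₅)(1 - z*_α u₁u₂u₄u₅) = (1/A)·((u₁u₂u₄u₅)²/(u₃u₆))·(1 - u₃/(u₄u₅))(1 - u₆/(u₂u₄))(1 - u₆/(u₁u₅))(1 - u₃/(u₁u₂)). -/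
lemma aux_B_frac (u1 u2 u3 u4 u5 u6 : ℂ)
    (h1 : u1 ≠ 0) (h2 : u2 ≠ 0) (h3 : u3 ≠ 0) (h4 : u4 ≠ 0) (h5 : u5 ≠ 0) (h6 : u6 ≠ 0) :
    -((u1 - u1⁻¹) * (u4 - u4⁻¹)) - (u2 - u2⁻¹) * (u5 - u5⁻¹) - (u3 - u3⁻¹) * (u6 - u6⁻¹)
    = -((u1^2-1)*(u4^2-1)*u2*u3*u5*u6 + (u2^2-1)*(u5^2-1)*u1*u3*u4*u6
        + (u3^2-1)*(u6^2-1)*u1*u2*u4*u5) / (u1*u2*u3*u4*u5*u6) := by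
  have h14 : u1 * u4 ≠ 0 := mul_ne_zero h1 h4
  have h25 : u2 * u5 ≠ 0 := mul_ne_zero h2 h5
  have h36 : u3 * u6 ≠ 0 := mul_ne_zero h3 h6
  have hP : u1*u2*u3*u4*u5*u6 ≠ 0 :=
    mul_ne_zero (mul_ne_zero (mul_ne_zero (mul_ne_zero (mul_ne_zero h1 h2) h3) h4) h5) h6
  have e1 : u1 - u1⁻¹ = (u1^2 - 1) / u1 := by field_simp
  have e2 : u2 - u2⁻¹ = (u2^2 - 1) / u2 := by field_simp
  have e3 : u3 - u3⁻¹ = (u3^2 - 1) / u3 := by field_simp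
  have e4 : u4 - u4⁻¹ = (u4^2 - 1) / u4 := by field_simp
  have e5 : u5 - u5⁻¹ = (u5^2 - 1) / u5 := by field_simp
  have e6 : u6 - u6⁻¹ = (u6^2 - 1) / u6 := by field_simp
  rw [e1, e2, e3, e4, e5, e6, div_mul_div_comm, div_mul_div_comm, div_mul_div_comm,
    ← neg_div, div_sub_div _ _ h14 h25, div_sub_div _ _ (mul_ne_zero h14 h25) h36,
    div_eq_div_iff (mul_ne_zero (mul_ne_zero h14 h25) h36) hP]
  ring

lemma aux_C_frac (u1 u2 u3 u4 u5 u6 : ℂ)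
    (h1 : u1 ≠ 0) (h2 : u2 ≠ 0) (h3 : u3 ≠ 0) (h4 : u4 ≠ 0) (h5 : u5 ≠ 0) (h6 : u6 ≠ 0) :
    (u1 * u4)⁻¹ + (u2 * u5)⁻¹ + (u3 * u6)⁻¹ - (u1 * u2 * u6)⁻¹
        - (u1 * u3 * u5)⁻¹ - (u2 * u3 * u4)⁻¹ - (u4 * u5 * u6)⁻¹
        + (u1 * u2 * u3 * u4 * u5 * u6)⁻¹
    = (u2*u3*u5*u6 + u1*u3*u4*u6 + u1*u2*u4*u5 - u3*u4*u5 - u2*u4*u6 - u1*u5*u6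
        - u1*u2*u3 + 1) / (u1*u2*u3*u4*u5*u6) := by
  have hP : u1*u2*u3*u4*u5*u6 ≠ 0 :=
    mul_ne_zero (mul_ne_zero (mul_ne_zero (mul_ne_zero (mul_ne_zero h1 h2) h3) h4) h5) h6
  have c1 : (u1*u4)⁻¹ = (u2*u3*u5*u6)/(u1*u2*u3*u4*u5*u6) := by
    rw [eq_div_iff hP]; field_simp
  have c2 : (u2*u5)⁻¹ = (u1*u3*u4*u6)/(u1*u2*u3*u4*u5*u6) := by
    rw [eq_div_iff hP]; field_simp
  have c3 : (u3*u6)⁻¹ = (u1*u2*u4*u5)/(u1*u2*u3*u4*u5*u6) := by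
    rw [eq_div_iff hP]; field_simp
  have c4 : (u1*u2*u6)⁻¹ = (u3*u4*u5)/(u1*u2*u3*u4*u5*u6) := by
    rw [eq_div_iff hP]; field_simp
  have c5 : (u1*u3*u5)⁻¹ = (u2*u4*u6)/(u1*u2*u3*u4*u5*u6) := by
    rw [eq_div_iff hP]; field_simp
  have c6 : (u2*u3*u4)⁻¹ = (u1*u5*u6)/(u1*u2*u3*u4*u5*u6) := by
    rw [eq_div_iff hP]; field_simp
  have c7 : (u4*u5*u6)⁻¹ = (u1*u2*u3)/(u1*u2*u3*u4*u5*u6) := by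
    rw [eq_div_iff hP]; field_simp
  have c8 : (u1*u2*u3*u4*u5*u6)⁻¹ = (1:ℂ)/(u1*u2*u3*u4*u5*u6) := by
    rw [eq_div_iff hP]; field_simp
  rw [c1, c2, c3, c4, c5, c6, c7, c8]
  simp only [← add_div, ← sub_div]

set_option maxHeartbeats 2000000 in
/-- Vieta computation for the critical point quadratic of the 6j-symbol:
`(1 - z u₁u₂u₄u₅)(1 - z* u₁u₂u₄u₅) =
  (1/A)·((u₁u₂u₄u₅)²/(u₃u₆))·(1 - u₃/(u₄u₅))(1 - u₆/(u₂u₄))(1 - u₆/(u₁u₅))(1 - u₃/(u₁u₂))`. -/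
theorem root_product_1245 (u1 u2 u3 u4 u5 u6 : ℂ)
    (h1 : u1 ≠ 0) (h2 : u2 ≠ 0) (h3 : u3 ≠ 0) (h4 : u4 ≠ 0) (h5 : u5 ≠ 0) (h6 : u6 ≠ 0)
    (A B C : ℂ)
    (hA : A = u1 * u4 + u2 * u5 + u3 * u6 - u1 * u2 * u6 - u1 * u3 * u5
        - u2 * u3 * u4 - u4 * u5 * u6 + u1 * u2 * u3 * u4 * u5 * u6)
    (hA0 : A ≠ 0)
    (hB : B = -((u1 - u1⁻¹) * (u4 - u4⁻¹)) - (u2 - u2⁻¹) * (u5 - u5⁻¹)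
        - (u3 - u3⁻¹) * (u6 - u6⁻¹))
    (hC : C = (u1 * u4)⁻¹ + (u2 * u5)⁻¹ + (u3 * u6)⁻¹ - (u1 * u2 * u6)⁻¹
        - (u1 * u3 * u5)⁻¹ - (u2 * u3 * u4)⁻¹ - (u4 * u5 * u6)⁻¹
        + (u1 * u2 * u3 * u4 * u5 * u6)⁻¹)
    (z zs : ℂ) (hsum : z + zs = -B / A) (hprod : z * zs = C / A) :
    (1 - z * (u1 * u2 * u4 * u5)) * (1 - zs * (u1 * u2 * u4 * u5)) =
      (1 / A) * ((u1 * u2 * u4 * u5) ^ 2 / (u3 * u6)) *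
        ((1 - u3 / (u4 * u5)) * (1 - u6 / (u2 * u4)) * (1 - u6 / (u1 * u5)) *
          (1 - u3 / (u1 * u2))) := by
  have hP : u1*u2*u3*u4*u5*u6 ≠ 0 :=
    mul_ne_zero (mul_ne_zero (mul_ne_zero (mul_ne_zero (mul_ne_zero h1 h2) h3) h4) h5) h6
  have h36 : u3 * u6 ≠ 0 := mul_ne_zero h3 h6
  have h45 : u4 * u5 ≠ 0 := mul_ne_zero h4 h5
  have h24 : u2 * u4 ≠ 0 := mul_ne_zero h2 h4
  have h15 : u1 * u5 ≠ 0 := mul_ne_zero h1 h5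
  have h12 : u1 * u2 ≠ 0 := mul_ne_zero h1 h2
  have hB' : B = -((u1^2-1)*(u4^2-1)*u2*u3*u5*u6 + (u2^2-1)*(u5^2-1)*u1*u3*u4*u6
      + (u3^2-1)*(u6^2-1)*u1*u2*u4*u5) / (u1*u2*u3*u4*u5*u6) := by
    rw [hB]; exact aux_B_frac u1 u2 u3 u4 u5 u6 h1 h2 h3 h4 h5 h6
  have hC' : C = (u2*u3*u5*u6 + u1*u3*u4*u6 + u1*u2*u4*u5 - u3*u4*u5 - u2*u4*u6 - u1*u5*u6
      - u1*u2*u3 + 1) / (u1*u2*u3*u4*u5*u6) := by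
    rw [hC]; exact aux_C_frac u1 u2 u3 u4 u5 u6 h1 h2 h3 h4 h5 h6
  have key : (1 - z * (u1 * u2 * u4 * u5)) * (1 - zs * (u1 * u2 * u4 * u5)) =
      1 - (z + zs) * (u1 * u2 * u4 * u5) + (z * zs) * (u1 * u2 * u4 * u5) ^ 2 := by
    ring
  rw [key, hsum, hprod]
  apply mul_left_cancel₀ hA0
  have lhs : A * (1 - -B / A * (u1 * u2 * u4 * u5) + C / A * (u1 * u2 * u4 * u5) ^ 2)
      = A + B * (u1 * u2 * u4 * u5) + C * (u1 * u2 * u4 * u5) ^ 2 := by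
    field_simp; ring
  rw [lhs]
  rw [show A * ((1 / A) * ((u1 * u2 * u4 * u5) ^ 2 / (u3 * u6)) *
      ((1 - u3 / (u4 * u5)) * (1 - u6 / (u2 * u4)) * (1 - u6 / (u1 * u5)) *
        (1 - u3 / (u1 * u2)))) =
      (A * (1 / A)) * (((u1 * u2 * u4 * u5) ^ 2 / (u3 * u6)) *
      ((1 - u3 / (u4 * u5)) * (1 - u6 / (u2 * u4)) * (1 - u6 / (u1 * u5)) *
        (1 - u3 / (u1 * u2)))) from by ring,
    mul_one_div, div_self hA0, one_mul]
  have r1 : 1 - u3 / (u4 * u5) = (u4 * u5 - u3) / (u4 * u5) := by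
    rw [sub_div, div_self h45]
  have r2 : 1 - u6 / (u2 * u4) = (u2 * u4 - u6) / (u2 * u4) := by
    rw [sub_div, div_self h24]
  have r3 : 1 - u6 / (u1 * u5) = (u1 * u5 - u6) / (u1 * u5) := by
    rw [sub_div, div_self h15]
  have r4 : 1 - u3 / (u1 * u2) = (u1 * u2 - u3) / (u1 * u2) := by
    rw [sub_div, div_self h12]
  rw [hB', hC', r1, r2, r3, r4]
  simp only [div_mul_div_comm]
  rw [div_mul_eq_mul_div, div_mul_eq_mul_div, add_assoc, ← add_div,
    add_div' _ _ _ hP, hA,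
    div_eq_div_iff hP (mul_ne_zero h36 (mul_ne_zero (mul_ne_zero (mul_ne_zero h45 h24) h15) h12))]
  ring
end
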